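/- Let V be a J-isometry on H, A := ((J − VJV*)₊)^{1/2}, p₊ the range projection of A, and B : H → H an isometry of H with final space Ran(I − p₊) (which exists since Ran(I − p₊) ⊇ closure(Ran JV), an infinite-dimensional subspace when needed). Define on Ĥ := H ⊕ H the operators Ĵ := J ⊕ I and V̂ := [[V, A],[0, B*]] (block matrix). Then V̂*ĴV̂ = Ĵ and V̂ĴV̂* ≥ Ĵ; that is, V̂ is a Ĵ-binoncontractive Ĵ-isometry on the Krein space (Ĥ, Ĵ). -/

import Mathlib

open ContinuousLinearMap in
/-- For a positive operator `A`, `A (A x) = 0` implies `A x = 0`. -/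
lemma aux_pos_cancel {H : Type*} [NormedAddCommGroup H] [InnerProductSpace ℂ H]
    [CompleteSpace H] {A : H →L[ℂ] H} (hA : A.IsPositive) {x : H}
    (h : A (A x) = 0) : A x = 0 := by
  have hsa : ContinuousLinearMap.adjoint A = A := isSelfAdjoint_iff'.mp hA.isSelfAdjoint
  have : (inner ℂ (A x) (A x) : ℂ) = 0 := by
    nth_rewrite 1 [← hsa]
    rw [adjoint_inner_left, h, inner_zero_right]
  simpa [inner_self_eq_zero] using this

set_option maxHeartbeats 1600000 in
/-- let `V` be a J-isometry, `A = ((J - VJV*)₊)^{1/2}`, `p₊` the range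
projection of `A`, and `B` an isometry of `H` with final space `Ran(I - p₊)`. On
`Ĥ = H ⊕ H` with `Ĵ = J ⊕ I`, the block operator `V̂ = [[V, A],[0, B*]]` satisfies
`V̂*ĴV̂ = Ĵ` and `V̂ĴV̂* ≥ Ĵ`: it is a Ĵ-binoncontractive Ĵ-isometry. -/
theorem block_dilation_binoncontractive_isometry {H : Type*} [NormedAddCommGroup H]
    [InnerProductSpace ℂ H] [CompleteSpace H]
    (J V : H →L[ℂ] H) (hJ : IsSelfAdjoint J) (hJ2 : J ∘L J = 1)
    (hV : ContinuousLinearMap.adjoint V ∘L J ∘L V = J)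
    -- the positive part `Spos = (J - VJV*)₊` of `J - VJV*`
    (Spos : H →L[ℂ] H) (hSpos : Spos.IsPositive)
    (hSneg : (Spos - (J - V ∘L J ∘L ContinuousLinearMap.adjoint V)).IsPositive)
    (hSorth : Spos ∘L (Spos - (J - V ∘L J ∘L ContinuousLinearMap.adjoint V)) = 0)
    -- `A = Spos^{1/2}`
    (A : H →L[ℂ] H) (hA : A.IsPositive) (hAsq : A ∘L A = Spos)
    -- `p₊` is the orthogonal projection onto `closure (Ran A)`
    (pp : H →L[ℂ] H) (hppsa : IsSelfAdjoint pp) (hppidem : pp ∘L pp = pp)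
    (hpprange : LinearMap.range (pp : H →ₗ[ℂ] H) = (LinearMap.range (A : H →ₗ[ℂ] H)).topologicalClosure)
    -- `B` is an isometry with final space `Ran (I - p₊)`
    (B : H →L[ℂ] H) (hB : ContinuousLinearMap.adjoint B ∘L B = 1)
    (hBrange : LinearMap.range (B : H →ₗ[ℂ] H) = LinearMap.range (((1 : H →L[ℂ] H) - pp : H →L[ℂ] H) : H →ₗ[ℂ] H))
    -- `Ĵ = J ⊕ I` and `V̂ = [[V, A], [0, B*]]` on `Ĥ = H ⊕ H`
    (Jhat : WithLp 2 (H × H) →L[ℂ] WithLp 2 (H × H))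
    (hJhat : ∀ x : WithLp 2 (H × H), (Jhat x).fst = J x.fst ∧ (Jhat x).snd = x.snd)
    (Vhat : WithLp 2 (H × H) →L[ℂ] WithLp 2 (H × H))
    (hVhat : ∀ x : WithLp 2 (H × H),
      (Vhat x).fst = V x.fst + A x.snd ∧ (Vhat x).snd = ContinuousLinearMap.adjoint B x.snd) :
    ContinuousLinearMap.adjoint Vhat ∘L Jhat ∘L Vhat = Jhat ∧
    (Vhat ∘L Jhat ∘L ContinuousLinearMap.adjoint Vhat - Jhat).IsPositive := by
  classical
  set V' := ContinuousLinearMap.adjoint V with hV'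
  have hJ2' : ∀ x, J (J x) = x := fun x => by
    have := ContinuousLinearMap.ext_iff.mp hJ2 x; simpa using this
  have hV1 : ∀ x, V' (J (V x)) = J x := fun x => by
    have := ContinuousLinearMap.ext_iff.mp hV x; simpa using this
  have hJsa : ContinuousLinearMap.adjoint J = J := ContinuousLinearMap.isSelfAdjoint_iff'.mp hJ
  have hAsa : ContinuousLinearMap.adjoint A = A := ContinuousLinearMap.isSelfAdjoint_iff'.mp hA.isSelfAdjoint
  have hSpossa : ContinuousLinearMap.adjoint Spos = Spos :=
    ContinuousLinearMap.isSelfAdjoint_iff'.mp hSpos.isSelfAdjoint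
  have hppsa' : ContinuousLinearMap.adjoint pp = pp :=
    ContinuousLinearMap.isSelfAdjoint_iff'.mp hppsa
  set S : H →L[ℂ] H := J - V ∘L J ∘L V' with hS
  set Sneg : H →L[ℂ] H := Spos - S with hSnegdef
  have hSx : ∀ x, S x = J x - V (J (V' x)) := fun x => rfl
  have f1 : ∀ x, S (J (V x)) = 0 := by
    intro x
    rw [hSx, hV1, hJ2' (V x), hJ2' x, sub_self]
  have horth : ∀ y, Spos (Spos y) = Spos (S y) := by
    intro y
    have h := ContinuousLinearMap.ext_iff.mp hSorth y
    simp only [ContinuousLinearMap.comp_apply, ContinuousLinearMap.zero_apply] at h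
    have h2 : Sneg y = Spos y - S y := rfl
    rw [h2, map_sub, sub_eq_zero] at h
    exact h
  have f2 : ∀ x, Spos (J (V x)) = 0 := by
    intro x
    apply aux_pos_cancel hSpos
    rw [horth, f1, map_zero]
  have hAA : ∀ y, A (A y) = Spos y := fun y => by
    have := ContinuousLinearMap.ext_iff.mp hAsq y; simpa using this
  have f3 : ∀ x, A (J (V x)) = 0 := by
    intro x
    apply aux_pos_cancel hA
    rw [hAA, f2]
  have f4 : ∀ x, Sneg (J (V x)) = 0 := by
    intro x
    simp only [hSnegdef, ContinuousLinearMap.sub_apply, f1, f2, sub_zero]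
  have f5 : Sneg ∘L J ∘L S = Sneg := by
    ext x
    simp only [ContinuousLinearMap.comp_apply, hSx, map_sub, hJ2']
    rw [f4, sub_zero]
  have hSsa : ContinuousLinearMap.adjoint S = S := by
    rw [hS]
    simp only [map_sub, ContinuousLinearMap.adjoint_comp, ContinuousLinearMap.adjoint_adjoint,
      hJsa, hV']
    rw [ContinuousLinearMap.comp_assoc]
  have hSnegsa : ContinuousLinearMap.adjoint Sneg = Sneg := by
    rw [hSnegdef, map_sub, hSpossa, hSsa]
  have f5' : S ∘L J ∘L Sneg = Sneg := by
    have h := congrArg ContinuousLinearMap.adjoint f5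
    simpa [ContinuousLinearMap.adjoint_comp, hSsa, hSnegsa, hJsa,
      ContinuousLinearMap.comp_assoc] using h
  have horthop : Spos ∘L S = Spos ∘L Spos := by
    ext y
    simp only [ContinuousLinearMap.comp_apply]
    exact (horth y).symm
  have f7 : ∀ x, A (J (Sneg x)) = 0 := by
    intro x
    have h4 : Spos (Spos (J (Sneg x))) = 0 := by
      have h1 : Spos ∘L (S ∘L J ∘L Sneg) = Spos ∘L Sneg := by rw [f5']
      rw [hSorth, ← ContinuousLinearMap.comp_assoc, ← ContinuousLinearMap.comp_assoc,
        horthop] at h1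
      have := ContinuousLinearMap.ext_iff.mp h1 x
      simpa [ContinuousLinearMap.comp_assoc] using this
    have h2 : Spos (J (Sneg x)) = 0 := aux_pos_cancel hSpos h4
    apply aux_pos_cancel hA
    rw [hAA, h2]
  have f8 : ∀ x, Spos (J (Spos x)) = Spos x := by
    intro x
    have h1 : Spos x = S x + Sneg x := by
      rw [hSnegdef]
      simp only [ContinuousLinearMap.sub_apply]
      abel
    have h2 : Spos (J (Sneg x)) = 0 := by rw [← hAA, f7, map_zero]
    have h3 : Spos (J (S x)) = Spos x := by
      rw [hSx, map_sub, map_sub, hJ2', f2, sub_zero]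
    calc Spos (J (Spos x)) = Spos (J (S x + Sneg x)) := by rw [← h1]
      _ = Spos (J (S x)) + Spos (J (Sneg x)) := by rw [map_add, map_add]
      _ = Spos x := by rw [h2, h3, add_zero]
  have f9 : ∀ x, A (J (A (A x))) = A x := by
    intro x
    set u := J (A (A x)) - x with hu
    have hAw : A (A u) = 0 := by
      rw [hu, map_sub, map_sub, hAA, hAA, f8, sub_self]
    have hw : A u = 0 := by
      have h0 : (inner ℂ (A u) (A u) : ℂ) = 0 := by
        nth_rewrite 1 [← hAsa]
        rw [ContinuousLinearMap.adjoint_inner_left, hAw, inner_zero_right]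
      simpa [inner_self_eq_zero] using h0
    rw [hu, map_sub, sub_eq_zero] at hw
    exact hw
  have f10 : ∀ x, pp (A x) = A x := by
    intro x
    have hmem : A x ∈ LinearMap.range (pp : H →ₗ[ℂ] H) := by
      rw [hpprange]
      exact Submodule.le_topologicalClosure _ (LinearMap.mem_range_self _ x)
    obtain ⟨y, hy⟩ := hmem
    rw [ContinuousLinearMap.coe_coe] at hy
    have := ContinuousLinearMap.ext_iff.mp hppidem y
    simp only [ContinuousLinearMap.comp_apply] at this
    rw [← hy, this, hy]
  have f11 : ∀ x, pp x = 0 → A x = 0 := by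
    intro x hx
    have h0 : (inner ℂ (A x) (A x) : ℂ) = 0 := by
      nth_rewrite 1 [← hAsa]
      rw [ContinuousLinearMap.adjoint_inner_left, ← f10 (A x), ← hppsa',
        ContinuousLinearMap.adjoint_inner_right, hx, inner_zero_left]
    simpa [inner_self_eq_zero] using h0
  have f12 : ∀ x, A (J (A x)) = pp x := by
    intro x
    set T : H →L[ℂ] H := A ∘L J ∘L A - pp with hT
    have hker : (LinearMap.range (A : H →ₗ[ℂ] H)).topologicalClosure ≤ LinearMap.ker (T : H →ₗ[ℂ] H) := by
      apply Submodule.topologicalClosure_minimal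
      · rintro _ ⟨z, rfl⟩
        simp only [LinearMap.mem_ker, hT, ContinuousLinearMap.coe_sub', Pi.sub_apply,
          ContinuousLinearMap.coe_comp', Function.comp_apply, ContinuousLinearMap.coe_coe]
        rw [f9, f10, sub_self]
      · exact ContinuousLinearMap.isClosed_ker T
    have hTpp : T (pp x) = 0 := by
      have hm : pp x ∈ LinearMap.range (pp : H →ₗ[ℂ] H) := LinearMap.mem_range_self _ x
      rw [hpprange] at hm
      exact hker hm
    have hppx0 : pp (x - pp x) = 0 := by
      have := ContinuousLinearMap.ext_iff.mp hppidem x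
      simp only [ContinuousLinearMap.comp_apply] at this
      rw [map_sub, this, sub_self]
    have hTrest : T (x - pp x) = 0 := by
      simp only [hT, ContinuousLinearMap.sub_apply, ContinuousLinearMap.comp_apply]
      rw [f11 _ hppx0, hppx0, map_zero, map_zero, sub_self]
    have hTx : T x = 0 := by
      have hsum : T x = T (pp x) + T (x - pp x) := by rw [← map_add]; congr 1; abel
      rw [hsum, hTpp, hTrest, add_zero]
    simp only [hT, ContinuousLinearMap.sub_apply, ContinuousLinearMap.comp_apply,
      sub_eq_zero] at hTx
    exact hTx
  have hBpt : ∀ y, ContinuousLinearMap.adjoint B (B y) = y := fun y => by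
    have := ContinuousLinearMap.ext_iff.mp hB y; simpa using this
  have hr_idem : ∀ y, ((1 : H →L[ℂ] H) - pp) (((1 : H →L[ℂ] H) - pp) y)
      = ((1 : H →L[ℂ] H) - pp) y := by
    intro y
    have := ContinuousLinearMap.ext_iff.mp hppidem y
    simp only [ContinuousLinearMap.comp_apply] at this
    simp only [ContinuousLinearMap.sub_apply, ContinuousLinearMap.one_apply, map_sub, this]
    abel
  have f13 : B ∘L ContinuousLinearMap.adjoint B = (1 : H →L[ℂ] H) - pp := by
    set q : H →L[ℂ] H := B ∘L ContinuousLinearMap.adjoint B with hq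
    set r : H →L[ℂ] H := (1 : H →L[ℂ] H) - pp with hr
    have hqr : q ∘L r = r := by
      ext x
      have hmem : r x ∈ LinearMap.range (B : H →ₗ[ℂ] H) := by
        rw [hBrange]; exact LinearMap.mem_range_self _ x
      obtain ⟨u, hu⟩ := hmem
      rw [ContinuousLinearMap.coe_coe] at hu
      simp only [ContinuousLinearMap.comp_apply, hq, ← hu, hBpt]
    have hrq : r ∘L q = q := by
      ext x
      have hmem : q x ∈ LinearMap.range (((1 : H →L[ℂ] H) - pp : H →L[ℂ] H) : H →ₗ[ℂ] H) := by
        rw [← hBrange]; exact ⟨ContinuousLinearMap.adjoint B x, rfl⟩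
      obtain ⟨w, hw⟩ := hmem
      simp only [ContinuousLinearMap.comp_apply]
      rw [← hw, hr]
      exact hr_idem w
    have hqsa : ContinuousLinearMap.adjoint q = q := by
      rw [hq, ContinuousLinearMap.adjoint_comp, ContinuousLinearMap.adjoint_adjoint]
    have hrsa : ContinuousLinearMap.adjoint r = r := by
      rw [hr, map_sub, hppsa']
      congr 1
      rw [ContinuousLinearMap.one_def, ContinuousLinearMap.adjoint_id]
    calc q = ContinuousLinearMap.adjoint q := hqsa.symm
      _ = ContinuousLinearMap.adjoint (r ∘L q) := by rw [hrq]
      _ = ContinuousLinearMap.adjoint q ∘L ContinuousLinearMap.adjoint r := by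
          rw [ContinuousLinearMap.adjoint_comp]
      _ = q ∘L r := by rw [hqsa, hrsa]
      _ = r := hqr
  have f13' : ∀ x, B (ContinuousLinearMap.adjoint B x) = x - pp x := by
    intro x
    have := ContinuousLinearMap.ext_iff.mp f13 x
    simpa using this
  have f14 : ∀ x, A (B x) = 0 := by
    intro x
    have hmem : B x ∈ LinearMap.range (((1 : H →L[ℂ] H) - pp : H →L[ℂ] H) : H →ₗ[ℂ] H) := by
      rw [← hBrange]; exact LinearMap.mem_range_self _ x
    obtain ⟨w, hw⟩ := hmem
    apply f11
    rw [← hw]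
    have := ContinuousLinearMap.ext_iff.mp hppidem w
    simp only [ContinuousLinearMap.comp_apply] at this
    simp only [ContinuousLinearMap.coe_coe, ContinuousLinearMap.sub_apply, ContinuousLinearMap.one_apply, map_sub, this]
    abel
  -- inner product helpers
  have hinA : ∀ (u v : H), (inner ℂ u (A v) : ℂ) = inner ℂ (A u) v := by
    intro u v
    nth_rewrite 2 [← hAsa]
    rw [ContinuousLinearMap.adjoint_inner_left]
  have hinJ : ∀ (u v : H), (inner ℂ (J u) v : ℂ) = inner ℂ u (J v) := by
    intro u v
    nth_rewrite 1 [← hJsa]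
    rw [ContinuousLinearMap.adjoint_inner_left]
  have hVhat1 : ∀ x : WithLp 2 (H × H), (Vhat x).fst = V x.fst + A x.snd := fun x => (hVhat x).1
  have hVhat2 : ∀ x : WithLp 2 (H × H), (Vhat x).snd = ContinuousLinearMap.adjoint B x.snd :=
    fun x => (hVhat x).2
  have hJhat1 : ∀ x : WithLp 2 (H × H), (Jhat x).fst = J x.fst := fun x => (hJhat x).1
  have hJhat2 : ∀ x : WithLp 2 (H × H), (Jhat x).snd = x.snd := fun x => (hJhat x).2
  have hpi : ∀ x y : WithLp 2 (H × H), inner ℂ x y = inner ℂ x.fst y.fst + inner ℂ x.snd y.snd :=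
    fun _ _ => rfl
  -- Part 1 : V̂† Ĵ V̂ = Ĵ
  have part1 : ContinuousLinearMap.adjoint Vhat ∘L Jhat ∘L Vhat = Jhat := by
    ext x
    apply ext_inner_right ℂ
    intro v
    simp only [ContinuousLinearMap.comp_apply]
    rw [ContinuousLinearMap.adjoint_inner_left]
    rw [hpi, hpi]
    rw [hJhat1, hJhat2, hJhat1, hJhat2]
    rw [hVhat1, hVhat2, hVhat1, hVhat2]
    rw [map_add, inner_add_left, inner_add_right, inner_add_right]
    have e1 : (inner ℂ (J (V x.fst)) (V v.fst) : ℂ) = inner ℂ (J x.fst) v.fst := by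
      rw [← ContinuousLinearMap.adjoint_inner_left V,
        show ContinuousLinearMap.adjoint V (J (V x.fst)) = J x.fst from hV1 x.fst]
    have e2 : (inner ℂ (J (V x.fst)) (A v.snd) : ℂ) = 0 := by
      rw [hinA, f3, inner_zero_left]
    have e3 : (inner ℂ (J (A x.snd)) (V v.fst) : ℂ) = 0 := by
      rw [hinJ, ← hinA, f3, inner_zero_right]
    have e4 : (inner ℂ (J (A x.snd)) (A v.snd) : ℂ) = inner ℂ (pp x.snd) v.snd := by
      rw [hinA, f12]
    have e5 : (inner ℂ (ContinuousLinearMap.adjoint B x.snd) (ContinuousLinearMap.adjoint B v.snd) : ℂ)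
        = inner ℂ (x.snd - pp x.snd) v.snd := by
      rw [ContinuousLinearMap.adjoint_inner_right, f13']
    have e6 : (inner ℂ (pp x.snd) v.snd : ℂ) + inner ℂ (x.snd - pp x.snd) v.snd = inner ℂ x.snd v.snd := by
      rw [← inner_add_left]
      congr 1
      abel
    rw [e1, e2, e3, e4, e5]
    linear_combination e6
  -- Ĵ is selfadjoint
  have hJhatsa : ContinuousLinearMap.adjoint Jhat = Jhat := by
    ext x
    apply ext_inner_right ℂ
    intro v
    rw [ContinuousLinearMap.adjoint_inner_left, hpi,
      hpi, hJhat1, hJhat2, hJhat1, hJhat2, hinJ]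
  -- components of adjoint Vhat
  have hVadj : ∀ x : WithLp 2 (H × H), ContinuousLinearMap.adjoint Vhat x
      = (WithLp.toLp 2 (V' x.fst, A x.fst + B x.snd)) := by
    intro x
    apply ext_inner_right ℂ
    intro v
    rw [ContinuousLinearMap.adjoint_inner_left, hpi,
      hpi, hVhat1, hVhat2]
    have e1 : (inner ℂ ((WithLp.toLp 2 (V' x.fst, A x.fst + B x.snd)).fst) v.fst : ℂ)
        = inner ℂ x.fst (V v.fst) := by
      show (inner ℂ (V' x.fst) v.fst : ℂ) = _
      rw [hV', ContinuousLinearMap.adjoint_inner_left]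
    have e2 : (inner ℂ ((WithLp.toLp 2 (V' x.fst, A x.fst + B x.snd)).snd) v.snd : ℂ)
        = inner ℂ x.fst (A v.snd) + inner ℂ x.snd (ContinuousLinearMap.adjoint B v.snd) := by
      show (inner ℂ (A x.fst + B x.snd) v.snd : ℂ) = _
      rw [inner_add_left, hinA, ContinuousLinearMap.adjoint_inner_right]
    rw [e1, e2, inner_add_right]
    ring
  -- Part 2
  refine ⟨part1, ContinuousLinearMap.isPositive_def'.mpr ⟨?_, ?_⟩⟩
  · -- selfadjointness
    rw [ContinuousLinearMap.isSelfAdjoint_iff']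
    rw [map_sub, hJhatsa]
    congr 1
    rw [ContinuousLinearMap.adjoint_comp, ContinuousLinearMap.adjoint_comp,
      ContinuousLinearMap.adjoint_adjoint, hJhatsa,
      ContinuousLinearMap.comp_assoc]
  · intro x
    rw [ContinuousLinearMap.reApplyInnerSelf_apply]
    have key : (inner ℂ ((Vhat ∘L Jhat ∘L ContinuousLinearMap.adjoint Vhat - Jhat) x) x : ℂ)
        = inner ℂ (Sneg x.fst) x.fst := by
      simp only [ContinuousLinearMap.sub_apply, ContinuousLinearMap.comp_apply,
        inner_sub_left]
      rw [← ContinuousLinearMap.adjoint_inner_right Vhat]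
      rw [hVadj x]
      rw [hpi, hpi, hJhat1, hJhat2, hJhat1, hJhat2]
      have egoal1 : (inner ℂ (J ((WithLp.toLp 2 (V' x.fst, A x.fst + B x.snd)).fst))
          ((WithLp.toLp 2 (V' x.fst, A x.fst + B x.snd)).fst) : ℂ)
          = inner ℂ (V (J (V' x.fst))) x.fst := by
        show (inner ℂ (J (V' x.fst)) (V' x.fst) : ℂ) = _
        rw [hV', ContinuousLinearMap.adjoint_inner_right]
      have egoal2 : (inner ℂ ((WithLp.toLp 2 (V' x.fst, A x.fst + B x.snd)).snd)
          ((WithLp.toLp 2 (V' x.fst, A x.fst + B x.snd)).snd) : ℂ)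
          = inner ℂ (Spos x.fst) x.fst + inner ℂ x.snd x.snd := by
        show (inner ℂ (A x.fst + B x.snd) (A x.fst + B x.snd) : ℂ) = _
        rw [inner_add_left, inner_add_right, inner_add_right]
        have eAA : (inner ℂ (A x.fst) (A x.fst) : ℂ) = inner ℂ (Spos x.fst) x.fst := by
          rw [hinA (A x.fst) x.fst, hAA]
        have eAB : (inner ℂ (A x.fst) (B x.snd) : ℂ) = 0 := by
          rw [← hinA, f14, inner_zero_right]
        have eBA : (inner ℂ (B x.snd) (A x.fst) : ℂ) = 0 := by
          rw [hinA, f14, inner_zero_left]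
        have eBB : (inner ℂ (B x.snd) (B x.snd) : ℂ) = inner ℂ x.snd x.snd := by
          rw [← ContinuousLinearMap.adjoint_inner_right B, hBpt]
        rw [eAA, eAB, eBA, eBB]
        ring
      rw [egoal1, egoal2]
      have eS : (inner ℂ (Sneg x.fst) x.fst : ℂ)
          = inner ℂ (Spos x.fst) x.fst - inner ℂ (J x.fst) x.fst + inner ℂ (V (J (V' x.fst))) x.fst := by
        have : Sneg x.fst = Spos x.fst - J x.fst + V (J (V' x.fst)) := by
          simp only [hSnegdef, hSx, ContinuousLinearMap.sub_apply]
          abel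
        rw [this, inner_add_left, inner_sub_left]
      rw [eS]
      ring
    rw [key]
    have := hSneg.2 x.fst
    rwa [ContinuousLinearMap.reApplyInnerSelf_apply] at this
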